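/- Let R be a commutative ring of prime characteristic p > 0, q = p^γ a power of p, S = R[t], l ≥ 1, A(t) ∈ M_l(S), and let H^e_n(τ) be the matrix polynomials with A(t)^{e−1} = Σ_{0≤n<q^e} H^e_n(t^{q^e}) t^n. Fix e ≥ 1 and 0 ≤ m < q^e with base-p expansion m = Σ_{j=0}^{γe−1} c_j p^j. Let W = D^e_R[t,θ_1,…,θ_{γe}]·(A(t)^{e−1}S^{⊕l}) and W' = D^e_R[t,θ_1,…,θ_{γe}]·(t·A(t)^{e−1}S^{⊕l}). If there exists x ∈ W with x ∉ W' such that θ_i x − c_{i−1} x ∈ W' for all 1 ≤ i ≤ γe (i.e. the class of x is a nonzero eigenvector of eigenvalue m in W/W'), then Σ_{n=0}^{m−1} D^e_R·(H^e_n(τ)R^{⊕l}) ≠ Σ_{n=0}^{m} D^e_R·(H^e_n(τ)R^{⊕l}) as additive subgroups of R[τ]^{⊕l}. -/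

import Mathlib

noncomputable section

open Polynomial

/-- The Frobenius-twisted product `A(t)^{e-1} = A(t)^{[q^{e-1}]} ⋯ A(t)^{[q]} · A(t)`
(with `e` factors), where `B^{[m]}` denotes the matrix of entrywise `m`-th powers. -/
def twistProd {R : Type*} [CommRing R] {l : ℕ} (q : ℕ)
    (A : Matrix (Fin l) (Fin l) (Polynomial R)) : ℕ → Matrix (Fin l) (Fin l) (Polynomial R)
  | 0 => 1
  | e + 1 => (Matrix.of fun i j => (A i j) ^ q ^ e) * twistProd q A e

/-- The matrix polynomial `H^e_n(τ)` extracted from `B = A(t)^{e-1}`: its `τ^k`-coefficient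
is the coefficient of `t^{k q^e + n}` in `B`, so that `B = Σ_{0≤n<q^e} H^e_n(t^{q^e}) t^n`. -/
def Hmat {R : Type*} [CommRing R] {l : ℕ} (q e : ℕ)
    (B : Matrix (Fin l) (Fin l) (Polynomial R)) (n : ℕ) :
    Matrix (Fin l) (Fin l) (Polynomial R) :=
  Matrix.of fun i j =>
    ∑ kk ∈ Finset.range ((B i j).natDegree + 1), C ((B i j).coeff (kk * q ^ e + n)) * X ^ kk

/-- An additive endomorphism `φ` of `R` is `Q`-linear if `φ(a^Q b) = a^Q φ(b)`. -/
def IsQLinear {R : Type*} [CommRing R] (Q : ℕ) (φ : R →+ R) : Prop :=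
  ∀ a b : R, φ (a ^ Q * b) = a ^ Q * φ b

/-- The Euler operator `θ = t^c ∂_t^{[c]}` acting on a polynomial:
`r t^n ↦ binom(n,c) r t^n`. -/
def thetaOp {R : Type*} [CommRing R] (c : ℕ) (f : Polynomial R) : Polynomial R :=
  f.sum fun n a => C ((n.choose c : R) * a) * X ^ n

/-- The coefficientwise action of an additive endomorphism `φ` of `R` on a polynomial. -/
def coeffMap {R : Type*} [CommRing R] (φ : R →+ R) (f : Polynomial R) : Polynomial R :=
  f.sum fun n a => C (φ a) * X ^ n

/-- `D^e_R[t,θ_1,…,θ_{γe}]·T`: the smallest additive subgroup of `R[t]^{⊕l}` containing `T`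
and stable under multiplication by `t`, under `θ_i = t^{p^{i-1}} ∂_t^{[p^{i-1}]}` for
`1 ≤ i ≤ γe`, and under the coefficientwise action of every `Q = q^e`-linear additive
endomorphism of `R`. -/
def VClosure {R : Type*} [CommRing R] {l : ℕ} (p γe Q : ℕ)
    (T : Set (Fin l → Polynomial R)) : AddSubgroup (Fin l → Polynomial R) :=
  sInf {V : AddSubgroup (Fin l → Polynomial R) | T ⊆ ↑V ∧
    (∀ v ∈ V, (fun i => X * v i) ∈ V) ∧
    (∀ i : ℕ, 1 ≤ i → i ≤ γe → ∀ v ∈ V, (fun j => thetaOp (p ^ (i - 1)) (v j)) ∈ V) ∧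
    (∀ φ : R →+ R, IsQLinear Q φ → ∀ v ∈ V, (fun j => coeffMap φ (v j)) ∈ V)}

end

noncomputable section

open Polynomial

/-- Generators of the additive subgroup `D^e_R·(H^e_n(τ) R^{⊕l})` of `R[τ]^{⊕l}`. -/
def DHGens {R : Type*} [CommRing R] {l : ℕ} (q e : ℕ)
    (B : Matrix (Fin l) (Fin l) (Polynomial R)) (n : ℕ) : Set (Fin l → Polynomial R) :=
  {y | ∃ φ : R →+ R, IsQLinear (q ^ e) φ ∧ ∃ v : Fin l → R,
    y = fun i => coeffMap φ (∑ j, Hmat q e B n i j * C (v j))}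

end

noncomputable section St18Aux
namespace St18
open Polynomial Classical

variable {R : Type*} [CommRing R]

/-- filter: keep only coefficients whose exponent satisfies `P`. -/
def pfilter (P : ℕ → Prop) (f : R[X]) : R[X] :=
  f.sum fun n a => if P n then monomial n a else 0

lemma sum_coeff_eq (g : ℕ → R → R) (hg : ∀ n, g n 0 = 0) (f : R[X]) (N : ℕ) :
    (f.sum fun n a => (monomial n (g n a) : R[X])).coeff N = g N (f.coeff N) := by
  rw [Polynomial.coeff_sum, Polynomial.sum_def]
  rw [Finset.sum_eq_single N (fun b _ hb => by
    rw [Polynomial.coeff_monomial, if_neg hb])]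
  · simp [Polynomial.coeff_monomial]
  · intro h
    simp only [Polynomial.coeff_monomial, if_pos rfl]
    rw [Polynomial.notMem_support_iff.mp h, hg]; simp

lemma coeffMap_coeff (φ : R →+ R) (f : R[X]) (N : ℕ) :
    (coeffMap φ f).coeff N = φ (f.coeff N) := by
  have : coeffMap φ f = f.sum fun n a => (monomial n (φ a) : R[X]) := by
    unfold coeffMap; congr 1; funext n a; rw [Polynomial.C_mul_X_pow_eq_monomial]
  rw [this, sum_coeff_eq _ (fun n => map_zero φ)]

lemma thetaOp_coeff (c : ℕ) (f : R[X]) (N : ℕ) :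
    (thetaOp c f).coeff N = (N.choose c : R) * f.coeff N := by
  have : thetaOp c f = f.sum fun n a => (monomial n ((n.choose c : R) * a) : R[X]) := by
    unfold thetaOp; congr 1; funext n a; rw [Polynomial.C_mul_X_pow_eq_monomial]
  rw [this, sum_coeff_eq _ (fun n => mul_zero _)]

lemma pfilter_coeff (P : ℕ → Prop) (f : R[X]) (N : ℕ) :
    (pfilter P f).coeff N = if P N then f.coeff N else 0 := by
  have : pfilter P f = f.sum fun n a =>
      (monomial n (if P n then a else 0) : R[X]) := by
    unfold pfilter; congr 1; funext n a
    split <;> simp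
  rw [this, sum_coeff_eq _ (fun n => by split <;> rfl)]

lemma pfilter_congr {P P' : ℕ → Prop} (h : ∀ N, P N ↔ P' N) (f : R[X]) :
    pfilter P f = pfilter P' f := by
  ext N; rw [pfilter_coeff, pfilter_coeff]
  simp only [h]

lemma pfilter_pfilter (P P' : ℕ → Prop) (f : R[X]) :
    pfilter P (pfilter P' f) = pfilter (fun N => P' N ∧ P N) f := by
  ext N; simp only [pfilter_coeff]
  by_cases h : P N <;> by_cases h' : P' N <;> simp [h, h']

lemma pfilter_add (P : ℕ → Prop) (f g : R[X]) :
    pfilter P (f + g) = pfilter P f + pfilter P g := by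
  ext N; simp only [pfilter_coeff, Polynomial.coeff_add]
  split <;> simp

/-- slice: `slice Q n f = Σ_k coeff(kQ+n) X^k`. -/
def slice (Q n : ℕ) (f : R[X]) : R[X] :=
  ∑ k ∈ Finset.range (f.natDegree + 1), C (f.coeff (k * Q + n)) * X ^ k

lemma slice_coeff (Q n : ℕ) (hQ : 0 < Q) (f : R[X]) (k : ℕ) :
    (slice Q n f).coeff k = f.coeff (k * Q + n) := by
  unfold slice
  rw [Polynomial.finset_sum_coeff]
  have : ∀ b ∈ Finset.range (f.natDegree + 1),
      (C (f.coeff (b * Q + n)) * X ^ b).coeff k =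
      if b = k then f.coeff (b * Q + n) else 0 := by
    intro b _
    rw [Polynomial.C_mul_X_pow_eq_monomial, Polynomial.coeff_monomial]
  rw [Finset.sum_congr rfl this, Finset.sum_ite_eq']
  split
  · rfl
  · next h =>
    rw [Finset.mem_range, not_lt] at h
    rw [eq_comm]
    apply Polynomial.coeff_eq_zero_of_natDegree_lt
    calc f.natDegree < f.natDegree + 1 := Nat.lt_succ_self _
      _ ≤ k := h
      _ ≤ k * Q := Nat.le_mul_of_pos_right _ hQ
      _ ≤ k * Q + n := Nat.le_add_right _ _

lemma slice_add (Q n : ℕ) (hQ : 0 < Q) (f g : R[X]) :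
    slice Q n (f + g) = slice Q n f + slice Q n g := by
  ext k
  simp [slice_coeff Q n hQ]

/-- embed: `embed Q n h = h(X^Q) · X^n`. -/
def embed (Q n : ℕ) (h : R[X]) : R[X] := expand R Q h * X ^ n

lemma embed_coeff_of_eq (Q n : ℕ) (hQ : 0 < Q) (hn : n < Q) (h : R[X]) (N : ℕ)
    (hN : N % Q = n) : (embed Q n h).coeff N = h.coeff (N / Q) := by
  unfold embed
  rw [Polynomial.coeff_mul_X_pow']
  have hle : n ≤ N := hN ▸ Nat.mod_le N Q
  rw [if_pos hle, Polynomial.coeff_expand hQ]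
  have hdvd : Q ∣ N - n := by
    refine ⟨N / Q, ?_⟩
    have := Nat.div_add_mod N Q
    omega
  rw [if_pos hdvd]
  congr 1
  obtain ⟨t, ht⟩ := hdvd
  have h1 : (N - n) / Q = t := by rw [ht, Nat.mul_div_cancel_left _ hQ]
  have hNt : N = Q * t + n := by omega
  have h2 : N / Q = t := by
    rw [hNt, Nat.mul_add_div hQ, Nat.div_eq_of_lt hn, add_zero]
  rw [h1, h2]

lemma embed_coeff_of_ne (Q n : ℕ) (hQ : 0 < Q) (hn : n < Q) (h : R[X]) (N : ℕ)
    (hN : N % Q ≠ n) : (embed Q n h).coeff N = 0 := by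
  unfold embed
  rw [Polynomial.coeff_mul_X_pow']
  split
  · next hle =>
    rw [Polynomial.coeff_expand hQ, if_neg]
    intro ⟨t, ht⟩
    apply hN
    have : N = Q * t + n := by omega
    rw [this, Nat.mul_add_mod]
    exact Nat.mod_eq_of_lt hn
  · rfl

end St18
end St18Aux
noncomputable section St18Aux2
namespace St18
open Polynomial

variable {R : Type*} [CommRing R]

/-- Lucas: `choose N (p^i) ≡ digit_i(N) mod p`, in `ZMod p`. -/
lemma choose_pow_digit (p : ℕ) [Fact p.Prime] (i N : ℕ) :
    ((N.choose (p ^ i) : ZMod p)) = ((N / p ^ i % p : ℕ) : ZMod p) := by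
  induction i generalizing N with
  | zero =>
    simp only [pow_zero, Nat.choose_one_right, Nat.pow_zero, Nat.div_one]
    rw [ZMod.natCast_mod]
  | succ i ih =>
    have hp : 0 < p := (Fact.out : p.Prime).pos
    have key := @Choose.choose_modEq_choose_mod_mul_choose_div N (p ^ (i+1)) p _
    have h1 : p ^ (i + 1) % p = 0 := by
      rw [pow_succ, Nat.mul_mod_left]
    have h2 : p ^ (i + 1) / p = p ^ i := by
      rw [pow_succ, Nat.mul_div_cancel _ hp]
    rw [h1, h2, Nat.choose_zero_right] at key
    have : ((N.choose (p ^ (i+1)) : ℤ) : ZMod p) =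
        ((1 * ((N / p).choose (p ^ i)) : ℤ) : ZMod p) := by
      rw [ZMod.intCast_eq_intCast_iff]
      exact_mod_cast key
    push_cast at this
    rw [this, ih (N / p), Nat.div_div_eq_div_mul, ← pow_succ', one_mul]

lemma choose_pow_digit' (p : ℕ) [Fact p.Prime] [CharP R p] (i N : ℕ) :
    ((N.choose (p ^ i) : R)) = ((N / p ^ i % p : ℕ) : R) := by
  have h := congrArg (ZMod.castHom (dvd_refl p) R) (choose_pow_digit p i N)
  rw [map_natCast, map_natCast] at h
  exact h

/-- digits below k agree iff residues mod `p^k` agree -/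
lemma digit_eq_of_mod_eq {p k N M : ℕ} (h : N % p ^ k = M % p ^ k)
    {i : ℕ} (hi : i < k) : N / p ^ i % p = M / p ^ i % p := by
  have key : ∀ a : ℕ, a / p ^ i % p = a % p ^ k / p ^ i % p := by
    intro a
    conv_lhs => rw [← Nat.mod_mul_right_div_self a (p ^ i) p]
    conv_rhs => rw [← Nat.mod_mul_right_div_self (a % p ^ k) (p ^ i) p]
    rw [Nat.mod_mod_of_dvd a (by rw [← pow_succ]; exact pow_dvd_pow p hi)]
  rw [key N, key M, h]

lemma mod_pow_succ_eq (p : ℕ) (hp : 0 < p) (a k : ℕ) :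
    a % p ^ (k+1) = p ^ k * (a / p ^ k % p) + a % p ^ k := by
  have hpk : 0 < p ^ k := Nat.pow_pos (n := k) hp
  conv_lhs => rw [← Nat.mod_add_div a (p ^ k), pow_succ]
  rw [Nat.add_mod, Nat.mul_mod_mul_left,
    Nat.mod_eq_of_lt (show a % p ^ k < p ^ k * p from
      lt_of_lt_of_le (Nat.mod_lt _ hpk) (Nat.le_mul_of_pos_right _ hp)),
    Nat.mod_eq_of_lt]
  · ring
  · have h1 : a % p ^ k < p ^ k := Nat.mod_lt _ hpk
    have h2 : a / p ^ k % p < p := Nat.mod_lt _ hp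
    calc a % p ^ k + p ^ k * (a / p ^ k % p) < p ^ k + p ^ k * (p - 1) := by
          have := Nat.mul_le_mul_left (p ^ k) (Nat.le_sub_one_of_lt h2)
          omega
      _ ≤ p ^ k * p := by
          have h3 : p - 1 + 1 = p := Nat.succ_pred_eq_of_pos hp
          have h4 : p ^ k + p ^ k * (p - 1) = p ^ k * p := by
            calc p ^ k + p ^ k * (p - 1) = p ^ k * (p - 1 + 1) := by ring
              _ = p ^ k * p := by rw [h3]
          omega

lemma mod_eq_of_digit_eq {p : ℕ} (hp : 0 < p) {k N M : ℕ}
    (h : ∀ i < k, N / p ^ i % p = M / p ^ i % p) : N % p ^ k = M % p ^ k := by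
  induction k with
  | zero => simp [Nat.mod_one]
  | succ k ih =>
    have hk : N % p ^ k = M % p ^ k := ih fun i hi => h i (Nat.lt_succ_of_lt hi)
    have hd : N / p ^ k % p = M / p ^ k % p := h k (Nat.lt_succ_self k)
    rw [mod_pow_succ_eq p hp N k, mod_pow_succ_eq p hp M k, hk, hd]

end St18
end St18Aux2
noncomputable section St18Aux3
namespace St18
open Polynomial Classical

variable {R : Type*} [CommRing R] {l : ℕ}

def vfilter (P : ℕ → Prop) (w : Fin l → R[X]) : Fin l → R[X] :=
  fun j => pfilter P (w j)

def Eop (c d : ℕ) (w : Fin l → R[X]) : Fin l → R[X] :=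
  (fun j => thetaOp c (w j)) - d • w

lemma Eop_coeff (c d : ℕ) (w : Fin l → R[X]) (j : Fin l) (N : ℕ) :
    ((Eop c d w) j).coeff N = ((N.choose c : R) - (d : R)) * (w j).coeff N := by
  show (thetaOp c (w j) - (d • w) j).coeff N = _
  rw [Polynomial.coeff_sub, thetaOp_coeff, Pi.smul_apply, Polynomial.coeff_smul,
    nsmul_eq_mul]
  ring

lemma Eop_iter_coeff (c d : ℕ) (w : Fin l → R[X]) (j : Fin l) (N : ℕ) (k : ℕ) :
    ((Eop c d)^[k] w j).coeff N = ((N.choose c : R) - (d : R)) ^ k * (w j).coeff N := by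
  induction k generalizing w with
  | zero => simp
  | succ k ih =>
    rw [Function.iterate_succ_apply, ih (Eop c d w), Eop_coeff, pow_succ]
    ring

lemma Eop_sub (c d : ℕ) (a b : Fin l → R[X]) :
    Eop c d (a - b) = Eop c d a - Eop c d b := by
  funext j; ext N
  simp only [Eop_coeff, Pi.sub_apply, Polynomial.coeff_sub, Eop_coeff]
  ring

lemma digit_pow_card_sub_one (p : ℕ) [Fact p.Prime] [CharP R p] (d D : ℕ)
    (hd : d < p) (hD : D < p) :
    (((D : R) - (d : R)) ^ (p - 1)) = if D = d then 0 else 1 := by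
  have hp2 : 2 ≤ p := (Fact.out : p.Prime).two_le
  split
  · next h =>
    subst h
    rw [sub_self, zero_pow (by omega)]
  · next h =>
    have hz : ((D : ZMod p) - (d : ZMod p)) ≠ 0 := by
      intro hc
      apply h
      have : (D : ZMod p) = (d : ZMod p) := by
        have := sub_eq_zero.mp hc
        exact this
      have hD' := ZMod.val_cast_of_lt hD
      have hd' := ZMod.val_cast_of_lt hd
      rw [← hD', ← hd', this]
    have := ZMod.pow_card_sub_one_eq_one hz
    have hmap := congrArg (ZMod.castHom (dvd_refl p) R) this
    rw [map_pow, map_sub, map_natCast, map_natCast, map_one] at hmap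
    exact hmap

lemma key_digit_filter (p : ℕ) [Fact p.Prime] [CharP R p] (i d : ℕ) (hd : d < p)
    (w : Fin l → R[X]) :
    w - vfilter (fun N => N / p ^ i % p = d) w = (Eop (p ^ i) d)^[p - 1] w := by
  have hp : 0 < p := (Fact.out : p.Prime).pos
  funext j
  ext N
  rw [Pi.sub_apply, Polynomial.coeff_sub, Eop_iter_coeff, choose_pow_digit' p i N]
  show (w j).coeff N - (pfilter _ (w j)).coeff N = _
  rw [pfilter_coeff, digit_pow_card_sub_one p d _ hd (Nat.mod_lt _ hp)]
  by_cases h : N / p ^ i % p = d <;> simp [h]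

section VC
variable (p Γ Q : ℕ) (T : Set (Fin l → R[X]))

lemma VClosure_subset : T ⊆ (VClosure p Γ Q T : Set (Fin l → R[X])) := by
  intro v hv
  rw [SetLike.mem_coe, VClosure, AddSubgroup.mem_sInf]
  exact fun V hV => hV.1 hv

variable {p Γ Q T}

lemma VClosure_X {v : Fin l → R[X]} (h : v ∈ VClosure p Γ Q T) :
    (fun i => X * v i) ∈ VClosure p Γ Q T := by
  rw [VClosure, AddSubgroup.mem_sInf] at h ⊢
  exact fun V hV => hV.2.1 v (h V hV)

lemma VClosure_theta {i : ℕ} (h1 : 1 ≤ i) (h2 : i ≤ Γ) {v : Fin l → R[X]}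
    (h : v ∈ VClosure p Γ Q T) :
    (fun j => thetaOp (p ^ (i - 1)) (v j)) ∈ VClosure p Γ Q T := by
  rw [VClosure, AddSubgroup.mem_sInf] at h ⊢
  exact fun V hV => hV.2.2.1 i h1 h2 v (h V hV)

lemma VClosure_coeffMap {φ : R →+ R} (hφ : IsQLinear Q φ) {v : Fin l → R[X]}
    (h : v ∈ VClosure p Γ Q T) :
    (fun j => coeffMap φ (v j)) ∈ VClosure p Γ Q T := by
  rw [VClosure, AddSubgroup.mem_sInf] at h ⊢
  exact fun V hV => hV.2.2.2 φ hφ v (h V hV)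

lemma VClosure_le {V : AddSubgroup (Fin l → R[X])} (h1 : T ⊆ ↑V)
    (h2 : ∀ v ∈ V, (fun i => X * v i) ∈ V)
    (h3 : ∀ i : ℕ, 1 ≤ i → i ≤ Γ → ∀ v ∈ V, (fun j => thetaOp (p ^ (i - 1)) (v j)) ∈ V)
    (h4 : ∀ φ : R →+ R, IsQLinear Q φ → ∀ v ∈ V, (fun j => coeffMap φ (v j)) ∈ V) :
    VClosure p Γ Q T ≤ V :=
  sInf_le ⟨h1, h2, h3, h4⟩

lemma VClosure_Eop {i : ℕ} (h1 : 1 ≤ i) (h2 : i ≤ Γ) (d : ℕ) {v : Fin l → R[X]}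
    (h : v ∈ VClosure p Γ Q T) :
    Eop (p ^ (i - 1)) d v ∈ VClosure p Γ Q T :=
  AddSubgroup.sub_mem _ (VClosure_theta h1 h2 h) (AddSubgroup.nsmul_mem _ h d)

lemma VClosure_Eop_iter {i : ℕ} (h1 : 1 ≤ i) (h2 : i ≤ Γ) (d : ℕ) {v : Fin l → R[X]}
    (h : v ∈ VClosure p Γ Q T) (k : ℕ) :
    (Eop (p ^ (i - 1)) d)^[k] v ∈ VClosure p Γ Q T := by
  induction k with
  | zero => exact h
  | succ k ih =>
    rw [Function.iterate_succ_apply']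
    exact VClosure_Eop h1 h2 d ih

lemma pfilter_true {P : ℕ → Prop} (hP : ∀ N, P N) (f : R[X]) : pfilter P f = f := by
  ext N; rw [pfilter_coeff, if_pos (hP N)]

/-- hard-direction filter stability -/
lemma VClosure_filter (p : ℕ) [Fact p.Prime] [CharP R p] {Γ Q : ℕ}
    {T : Set (Fin l → R[X])} {v : Fin l → R[X]} (h : v ∈ VClosure p Γ Q T) (n : ℕ) :
    vfilter (fun N => N % p ^ Γ = n % p ^ Γ) v ∈ VClosure p Γ Q T := by
  have hp : 0 < p := (Fact.out : p.Prime).pos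
  have main : ∀ k, k ≤ Γ →
      vfilter (fun N => ∀ i < k, N / p ^ i % p = n / p ^ i % p) v ∈ VClosure p Γ Q T := by
    intro k
    induction k with
    | zero =>
      intro _
      have : vfilter (fun N => ∀ i < 0, N / p ^ i % p = n / p ^ i % p) v = v := by
        funext j; exact pfilter_true (fun N => by omega) _
      rw [this]; exact h
    | succ k ih =>
      intro hk
      set w := vfilter (fun N => ∀ i < k, N / p ^ i % p = n / p ^ i % p) v with hw
      have hwV : w ∈ VClosure p Γ Q T := ih (by omega)
      set d := n / p ^ k % p with hd
      have hdp : d < p := Nat.mod_lt _ hp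
      have hkey := key_digit_filter p k d hdp w
      have hfil : vfilter (fun N => N / p ^ k % p = d) w ∈ VClosure p Γ Q T := by
        have : vfilter (fun N => N / p ^ k % p = d) w
            = w - (Eop (p ^ k) d)^[p - 1] w := by
          rw [← hkey]; abel
        rw [this]
        refine AddSubgroup.sub_mem _ hwV ?_
        have := VClosure_Eop_iter (i := k + 1) (by omega) (by omega) d hwV (p - 1)
        simpa using this
      have heq : vfilter (fun N => N / p ^ k % p = d) w
          = vfilter (fun N => ∀ i < k + 1, N / p ^ i % p = n / p ^ i % p) v := by
        funext j
        show pfilter _ (pfilter _ (v j)) = _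
        rw [pfilter_pfilter]
        refine pfilter_congr (fun N => ?_) _
        constructor
        · rintro ⟨hall, hdig⟩ i hi
          rcases Nat.lt_succ_iff_lt_or_eq.mp hi with hi' | hi'
          · exact hall i hi'
          · subst hi'; exact hdig
        · intro hall
          exact ⟨fun i hi => hall i (by omega), hall k (by omega)⟩
      rw [← heq]
      exact hfil
  have := main Γ le_rfl
  have heq : vfilter (fun N => ∀ i < Γ, N / p ^ i % p = n / p ^ i % p) v
      = vfilter (fun N => N % p ^ Γ = n % p ^ Γ) v := by
    funext j
    refine pfilter_congr (fun N => ?_) _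
    exact ⟨fun h' => mod_eq_of_digit_eq hp h', fun h' i hi => digit_eq_of_mod_eq h' hi⟩
  rw [← heq]
  exact this

/-- eigen-direction: if `(θ_i - d_i)x ∈ VClosure` for the digits `d_i` of `n`, then
`x` agrees with its residue-`n` part modulo `VClosure`. -/
lemma VClosure_eigen_filter (p : ℕ) [Fact p.Prime] [CharP R p] {Γ Q : ℕ}
    {T : Set (Fin l → R[X])} (x : Fin l → R[X]) (n : ℕ)
    (hE : ∀ i, 1 ≤ i → i ≤ Γ → Eop (p ^ (i - 1)) (n / p ^ (i - 1) % p) x ∈ VClosure p Γ Q T) :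
    x - vfilter (fun N => N % p ^ Γ = n % p ^ Γ) x ∈ VClosure p Γ Q T := by
  have hp : 0 < p := (Fact.out : p.Prime).pos
  have hp2 : 2 ≤ p := (Fact.out : p.Prime).two_le
  have main : ∀ k, k ≤ Γ →
      x - vfilter (fun N => ∀ i < k, N / p ^ i % p = n / p ^ i % p) x ∈ VClosure p Γ Q T := by
    intro k
    induction k with
    | zero =>
      intro _
      have : vfilter (fun N => ∀ i < 0, N / p ^ i % p = n / p ^ i % p) x = x := by
        funext j; exact pfilter_true (fun N => by omega) _
      rw [this, sub_self]
      exact AddSubgroup.zero_mem _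
    | succ k ih =>
      intro hk
      set w := vfilter (fun N => ∀ i < k, N / p ^ i % p = n / p ^ i % p) x with hw
      have hIH : x - w ∈ VClosure p Γ Q T := ih (by omega)
      set d := n / p ^ k % p with hd
      have hdp : d < p := Nat.mod_lt _ hp
      have hEx : Eop (p ^ k) d x ∈ VClosure p Γ Q T := by
        have := hE (k + 1) (by omega) (by omega)
        simpa using this
      have hEw : Eop (p ^ k) d w ∈ VClosure p Γ Q T := by
        have heq : Eop (p ^ k) d w = Eop (p ^ k) d x - Eop (p ^ k) d (x - w) := by
          rw [← Eop_sub, sub_sub_cancel]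
        rw [heq]
        refine AddSubgroup.sub_mem _ hEx ?_
        have := VClosure_Eop (i := k + 1) (by omega) (by omega) d hIH
        simpa using this
      have hiter : (Eop (p ^ k) d)^[p - 1] w ∈ VClosure p Γ Q T := by
        have hps : p - 1 = (p - 2) + 1 := by omega
        rw [hps, Function.iterate_succ_apply]
        have := VClosure_Eop_iter (i := k + 1) (by omega) (by omega) d hEw (p - 2)
        simpa using this
      have heq : vfilter (fun N => ∀ i < k + 1, N / p ^ i % p = n / p ^ i % p) x
          = vfilter (fun N => N / p ^ k % p = d) w := by
        funext j
        show _ = pfilter _ (pfilter _ (x j))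
        rw [pfilter_pfilter]
        refine pfilter_congr (fun N => ?_) _
        constructor
        · intro hall
          exact ⟨fun i hi => hall i (by omega), hall k (by omega)⟩
        · rintro ⟨hall, hdig⟩ i hi
          rcases Nat.lt_succ_iff_lt_or_eq.mp hi with hi' | hi'
          · exact hall i hi'
          · subst hi'; exact hdig
      have hdecomp : x - vfilter (fun N => ∀ i < k + 1, N / p ^ i % p = n / p ^ i % p) x
          = (x - w) + (Eop (p ^ k) d)^[p - 1] w := by
        rw [heq, ← key_digit_filter p k d hdp w]
        abel
      rw [hdecomp]
      exact AddSubgroup.add_mem _ hIH hiter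
  have := main Γ le_rfl
  have heq : vfilter (fun N => ∀ i < Γ, N / p ^ i % p = n / p ^ i % p) x
      = vfilter (fun N => N % p ^ Γ = n % p ^ Γ) x := by
    funext j
    refine pfilter_congr (fun N => ?_) _
    exact ⟨fun h' => mod_eq_of_digit_eq hp h', fun h' i hi => digit_eq_of_mod_eq h' hi⟩
  rw [← heq]
  exact this

end VC
end St18
end St18Aux3
noncomputable section St18Aux4
namespace St18
open Polynomial Classical

variable {R : Type*} [CommRing R]

lemma coeff_X_mul' (f : R[X]) (N : ℕ) :
    (X * f).coeff N = if 1 ≤ N then f.coeff (N - 1) else 0 := by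
  rw [show (X : R[X]) * f = f * X ^ 1 by ring, Polynomial.coeff_mul_X_pow']

lemma slice_X_mul {Q n : ℕ} (hQ : 0 < Q) (hn : n < Q) (f : R[X]) :
    slice Q n (X * f) = if n = 0 then X * slice Q (Q - 1) f else slice Q (n - 1) f := by
  by_cases h0 : n = 0
  · subst h0
    rw [if_pos rfl]
    ext k
    rw [slice_coeff Q 0 hQ, coeff_X_mul', coeff_X_mul']
    by_cases hk : 1 ≤ k
    · obtain ⟨k', rfl⟩ : ∃ k', k = k' + 1 := ⟨k - 1, by omega⟩
      have he : (k' + 1) * Q = k' * Q + Q := Nat.succ_mul _ _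
      rw [add_zero, he, if_pos (by omega), if_pos hk, Nat.add_sub_cancel,
        slice_coeff Q _ hQ]
      congr 1
      omega
    · have hk0 : k = 0 := by omega
      subst hk0
      rw [if_neg (by simp), if_neg hk]
  · rw [if_neg h0]
    ext k
    rw [slice_coeff Q n hQ, coeff_X_mul', if_pos (by omega), slice_coeff Q _ hQ]
    congr 1
    omega

lemma slice_theta {p Γ Q n i : ℕ} [Fact p.Prime] [CharP R p] (hQΓ : Q = p ^ Γ)
    (hi : i < Γ) (f : R[X]) :
    slice Q n (thetaOp (p ^ i) f) = (n / p ^ i % p) • slice Q n f := by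
  have hp : 0 < p := (Fact.out : p.Prime).pos
  have hQ : 0 < Q := hQΓ ▸ Nat.pow_pos (n := Γ) hp
  ext k
  rw [slice_coeff Q n hQ, thetaOp_coeff, Polynomial.coeff_smul, slice_coeff Q n hQ,
    choose_pow_digit' p i, nsmul_eq_mul]
  congr 2
  have hdvd : p ^ i ∣ Q := hQΓ ▸ pow_dvd_pow p (by omega)
  have h1 : (k * Q + n) / p ^ i = k * (Q / p ^ i) + n / p ^ i := by
    rw [Nat.add_div_of_dvd_right (Dvd.dvd.mul_left hdvd k), Nat.mul_div_assoc k hdvd]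
  rw [h1]
  have h2 : p ∣ Q / p ^ i := by
    rw [hQΓ, Nat.pow_div (by omega) hp]
    exact dvd_pow_self p (by omega)
  obtain ⟨t, ht⟩ := h2
  rw [ht, show k * (p * t) + n / p ^ i = n / p ^ i + (k * t) * p by ring,
    Nat.add_mul_mod_self_right]

lemma slice_coeffMap {Q n : ℕ} (hQ : 0 < Q) (φ : R →+ R) (f : R[X]) :
    slice Q n (coeffMap φ f) = coeffMap φ (slice Q n f) := by
  ext k
  rw [slice_coeff Q n hQ, coeffMap_coeff, coeffMap_coeff, slice_coeff Q n hQ]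

lemma coeffMap_Xpow_mul (φ : R →+ R) (b : ℕ) (h : R[X]) :
    coeffMap φ (X ^ b * h) = X ^ b * coeffMap φ h := by
  ext N
  rw [coeffMap_coeff, show (X : R[X]) ^ b * h = h * X ^ b by ring,
    show (X : R[X]) ^ b * coeffMap φ h = coeffMap φ h * X ^ b by ring,
    Polynomial.coeff_mul_X_pow', Polynomial.coeff_mul_X_pow']
  split
  · rw [coeffMap_coeff]
  · exact map_zero φ

lemma coeffMap_comp (φ ψ : R →+ R) (h : R[X]) :
    coeffMap φ (coeffMap ψ h) = coeffMap (φ.comp ψ) h := by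
  ext N
  rw [coeffMap_coeff, coeffMap_coeff, coeffMap_coeff]
  rfl

lemma coeffMap_id (f : R[X]) : coeffMap (AddMonoidHom.id R) f = f := by
  ext N
  rw [coeffMap_coeff]
  rfl

lemma IsQLinear_id (Q : ℕ) : IsQLinear Q (AddMonoidHom.id R) := fun _ _ => rfl

lemma IsQLinear_comp {Q : ℕ} {φ ψ : R →+ R} (hφ : IsQLinear Q φ) (hψ : IsQLinear Q ψ) :
    IsQLinear Q (φ.comp ψ) := by
  intro a b
  simp only [AddMonoidHom.comp_apply, hψ a b, hφ a]

lemma coeffMap_add (φ : R →+ R) (f g : R[X]) :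
    coeffMap φ (f + g) = coeffMap φ f + coeffMap φ g := by
  ext N
  simp [coeffMap_coeff, map_add]

lemma coeffMap_neg (φ : R →+ R) (f : R[X]) : coeffMap φ (-f) = -coeffMap φ f := by
  ext N
  simp [coeffMap_coeff]

lemma embed_add (Q n : ℕ) (f g : R[X]) :
    embed Q n (f + g) = embed Q n f + embed Q n g := by
  unfold embed
  rw [map_add, add_mul]

lemma embed_neg (Q n : ℕ) (f : R[X]) : embed Q n (-f) = -embed Q n f := by
  unfold embed
  rw [map_neg, neg_mul]

lemma embed_coeffMap {Q n : ℕ} (hQ : 0 < Q) (hn : n < Q) (φ : R →+ R) (h : R[X]) :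
    embed Q n (coeffMap φ h) = coeffMap φ (embed Q n h) := by
  ext N
  rw [coeffMap_coeff]
  by_cases hN : N % Q = n
  · rw [embed_coeff_of_eq Q n hQ hn _ N hN, embed_coeff_of_eq Q n hQ hn _ N hN,
      coeffMap_coeff]
  · rw [embed_coeff_of_ne Q n hQ hn _ N hN, embed_coeff_of_ne Q n hQ hn _ N hN,
      map_zero]

lemma embed_Xpow_mul (Q n a : ℕ) (h : R[X]) :
    embed Q n (X ^ a * h) = X ^ (a * Q) * embed Q n h := by
  unfold embed
  rw [map_mul, map_pow, Polynomial.expand_X, ← pow_mul]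
  ring_nf

lemma helper_mod {Q n s N : ℕ} (hn : n < Q) (h1 : s ≤ N) (h2 : Q ∣ N - s)
    (h3 : N % Q = n) : s % Q = n := by
  obtain ⟨t, ht⟩ := h2
  have hN : N = Q * t + s := by omega
  rw [hN, Nat.mul_add_mod] at h3
  exact h3

lemma kQn_mod {Q n : ℕ} (hn : n < Q) (k : ℕ) : (k * Q + n) % Q = n := by
  rw [Nat.mul_comm, Nat.mul_add_mod]
  exact Nat.mod_eq_of_lt hn

lemma slice_expand_shift {Q n s : ℕ} (hQ : 0 < Q) (hn : n < Q) (hs : s < 2 * Q)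
    (h : R[X]) :
    slice Q n (expand R Q h * X ^ s) =
      if s = n then h else if s = n + Q then X * h else 0 := by
  by_cases hsn : s = n
  · subst hsn
    rw [if_pos rfl]
    ext k
    rw [slice_coeff Q s hQ, Polynomial.coeff_mul_X_pow', if_pos (Nat.le_add_left _ _),
      Nat.add_sub_cancel, Polynomial.coeff_expand hQ, if_pos (dvd_mul_left Q k),
      Nat.mul_div_cancel _ hQ]
  · by_cases hsQ : s = n + Q
    · subst hsQ
      rw [if_neg hsn, if_pos rfl]
      ext k
      rw [slice_coeff Q n hQ, Polynomial.coeff_mul_X_pow', coeff_X_mul']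
      by_cases hk : 1 ≤ k
      · obtain ⟨k', rfl⟩ : ∃ k', k = k' + 1 := ⟨k - 1, by omega⟩
        have he : (k' + 1) * Q = k' * Q + Q := Nat.succ_mul _ _
        have he2 : k' * Q + Q + n - (n + Q) = k' * Q := by omega
        rw [he, if_pos (by omega), if_pos hk, he2, Polynomial.coeff_expand hQ,
          if_pos (dvd_mul_left Q k'), Nat.mul_div_cancel _ hQ, Nat.add_sub_cancel]
      · have hk0 : k = 0 := by omega
        subst hk0
        rw [if_neg (by simp; omega), if_neg hk]
    · rw [if_neg hsn, if_neg hsQ]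
      ext k
      rw [slice_coeff Q n hQ, Polynomial.coeff_mul_X_pow', Polynomial.coeff_zero]
      split
      · next hle =>
        rw [Polynomial.coeff_expand hQ, if_neg]
        intro hdvd
        have hmod : s % Q = n := helper_mod hn hle hdvd (kQn_mod hn k)
        have hdm := Nat.div_add_mod s Q
        rw [hmod] at hdm
        have ht : s / Q ≤ 1 := by
          by_contra hc
          push_neg at hc
          have : 2 * Q ≤ Q * (s / Q) := by
            calc 2 * Q = Q * 2 := by ring
              _ ≤ Q * (s / Q) := Nat.mul_le_mul_left Q hc
          omega
        set t := s / Q with htdef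
        interval_cases t <;> omega
      · rfl

lemma eq_sum_embed_slice {Q : ℕ} (hQ : 0 < Q) (f : R[X]) :
    f = ∑ j ∈ Finset.range Q, embed Q j (slice Q j f) := by
  ext N
  rw [Polynomial.finset_sum_coeff]
  have key : ∀ j ∈ Finset.range Q,
      (embed Q j (slice Q j f)).coeff N = if j = N % Q then f.coeff N else 0 := by
    intro j hj
    rw [Finset.mem_range] at hj
    by_cases h : N % Q = j
    · rw [if_pos h.symm, embed_coeff_of_eq Q j hQ hj _ N h, slice_coeff Q j hQ, ← h,
        Nat.div_add_mod']
    · rw [if_neg (fun hc => h hc.symm), embed_coeff_of_ne Q j hQ hj _ N h]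
  rw [Finset.sum_congr rfl key, Finset.sum_ite_eq', if_pos]
  rw [Finset.mem_range]
  exact Nat.mod_lt _ hQ

lemma pfilter_expand_shift {Q mm s : ℕ} (hQ : 0 < Q) (hmm : mm < Q) (h : R[X]) :
    pfilter (fun N => N % Q = mm) (expand R Q h * X ^ s) =
      if s % Q = mm then expand R Q h * X ^ s else 0 := by
  ext N
  rw [pfilter_coeff]
  have hvan : N % Q ≠ s % Q → (expand R Q h * X ^ s).coeff N = 0 := by
    intro hne
    rw [Polynomial.coeff_mul_X_pow']
    split
    · next hle =>
      rw [Polynomial.coeff_expand hQ, if_neg]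
      intro hdvd
      obtain ⟨t, ht⟩ := hdvd
      have hN : N = Q * t + s := by omega
      rw [hN, Nat.mul_add_mod] at hne
      exact hne rfl
    · rfl
  by_cases h1 : N % Q = mm <;> by_cases h2 : s % Q = mm
  · rw [if_pos h1, if_pos h2]
  · rw [if_pos h1, if_neg h2, Polynomial.coeff_zero]
    exact hvan (by rw [h1]; exact fun hc => h2 hc.symm)
  · rw [if_neg h1, if_pos h2]
    exact (hvan (by rw [h2]; exact h1)).symm
  · rw [if_neg h1, if_neg h2, Polynomial.coeff_zero]

lemma vfilter_eq_embed_slice {l Q m : ℕ} (hQ : 0 < Q) (hm : m < Q)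
    (x : Fin l → R[X]) :
    vfilter (fun N => N % Q = m) x = fun j => embed Q m (slice Q m (x j)) := by
  funext j
  ext N
  show (pfilter _ (x j)).coeff N = _
  rw [pfilter_coeff]
  by_cases h : N % Q = m
  · rw [if_pos h, embed_coeff_of_eq Q m hQ hm _ N h, slice_coeff Q m hQ, ← h,
      Nat.div_add_mod']
  · rw [if_neg h, embed_coeff_of_ne Q m hQ hm _ N h]

end St18
end St18Aux4
noncomputable section St18Aux5
namespace St18
open Polynomial Classical

variable {R : Type*} [CommRing R] {l : ℕ}

lemma slice_zero (Q n : ℕ) : slice Q n (0 : R[X]) = 0 := by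
  unfold slice
  simp

lemma slice_neg (Q n : ℕ) (hQ : 0 < Q) (f : R[X]) : slice Q n (-f) = -slice Q n f := by
  ext k
  simp [slice_coeff Q n hQ]

lemma coeffMap_zero (φ : R →+ R) : coeffMap φ (0 : R[X]) = 0 := by
  ext N
  simp [coeffMap_coeff]

section MS

variable (q e : ℕ) (B : Matrix (Fin l) (Fin l) (Polynomial R))

lemma Hmat_eq_slice (n : ℕ) (i j : Fin l) :
    Hmat q e B n i j = slice (q ^ e) n (B i j) := rfl

/-- generators of the `M`-subgroups, with condition `cond a j` -/
def MGenC (cond : ℕ → ℕ → Prop) : Set (Fin l → Polynomial R) :=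
  {y | ∃ (φ : R →+ R) (a j : ℕ) (f : Fin l → Polynomial R),
    IsQLinear (q ^ e) φ ∧ j < q ^ e ∧ cond a j ∧
    y = fun i => coeffMap φ (X ^ a * (Hmat q e B j).mulVec f i)}

def MsubC (cond : ℕ → ℕ → Prop) : AddSubgroup (Fin l → Polynomial R) :=
  AddSubgroup.closure (MGenC q e B cond)

lemma MsubC_mono {cond cond' : ℕ → ℕ → Prop} (h : ∀ a j, cond a j → cond' a j) :
    MsubC q e B cond ≤ MsubC q e B cond' := by
  apply AddSubgroup.closure_mono
  rintro y ⟨φ, a, j, f, h1, h2, h3, h4⟩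
  exact ⟨φ, a, j, f, h1, h2, h a j h3, h4⟩

lemma MsubC_mem_gen {cond : ℕ → ℕ → Prop} (φ : R →+ R) (a j : ℕ)
    (f : Fin l → Polynomial R) (h1 : IsQLinear (q ^ e) φ) (h2 : j < q ^ e)
    (h3 : cond a j) :
    (fun i => coeffMap φ (X ^ a * (Hmat q e B j).mulVec f i)) ∈ MsubC q e B cond :=
  AddSubgroup.subset_closure ⟨φ, a, j, f, h1, h2, h3, rfl⟩

lemma MsubC_xmul {cond cond' : ℕ → ℕ → Prop} (hc : ∀ a j, 1 ≤ a → cond' a j)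
    {g : Fin l → Polynomial R} (hg : g ∈ MsubC q e B cond) :
    (fun i => X * g i) ∈ MsubC q e B cond' := by
  induction hg using AddSubgroup.closure_induction with
  | mem y hy =>
    obtain ⟨φ, a, j, f, h1, h2, _, rfl⟩ := hy
    have : (fun i => X * (fun i => coeffMap φ (X ^ a * (Hmat q e B j).mulVec f i)) i)
        = fun i => coeffMap φ (X ^ (a + 1) * (Hmat q e B j).mulVec f i) := by
      funext i
      rw [show (X : R[X]) ^ (a + 1) * (Hmat q e B j).mulVec f i
          = X ^ 1 * (X ^ a * (Hmat q e B j).mulVec f i) by ring,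
        coeffMap_Xpow_mul, pow_one]
    rw [this]
    exact MsubC_mem_gen q e B φ (a + 1) j f h1 h2 (hc (a + 1) j (by omega))
  | zero =>
    have : (fun i => X * (0 : Fin l → R[X]) i) = (0 : Fin l → R[X]) := by
      funext i; simp
    rw [this]
    exact AddSubgroup.zero_mem _
  | add y z _ _ hy hz =>
    have : (fun i => X * (y + z) i) = (fun i => X * y i) + fun i => X * z i := by
      funext i; simp [mul_add]
    rw [this]
    exact AddSubgroup.add_mem _ hy hz
  | neg y _ hy =>
    have : (fun i => X * (-y) i) = -fun i => X * y i := by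
      funext i; simp
    rw [this]
    exact AddSubgroup.neg_mem _ hy

lemma MsubC_coeffMap {cond : ℕ → ℕ → Prop} {φ : R →+ R} (hφ : IsQLinear (q ^ e) φ)
    {g : Fin l → Polynomial R} (hg : g ∈ MsubC q e B cond) :
    (fun i => coeffMap φ (g i)) ∈ MsubC q e B cond := by
  induction hg using AddSubgroup.closure_induction with
  | mem y hy =>
    obtain ⟨ψ, a, j, f, h1, h2, h3, rfl⟩ := hy
    have : (fun i => coeffMap φ ((fun i => coeffMap ψ (X ^ a * (Hmat q e B j).mulVec f i)) i))
        = fun i => coeffMap (φ.comp ψ) (X ^ a * (Hmat q e B j).mulVec f i) := by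
      funext i
      rw [coeffMap_comp]
    rw [this]
    exact MsubC_mem_gen q e B (φ.comp ψ) a j f (IsQLinear_comp hφ h1) h2 h3
  | zero =>
    have : (fun i => coeffMap φ ((0 : Fin l → R[X]) i)) = (0 : Fin l → R[X]) := by
      funext i; simp [coeffMap_zero]
    rw [this]
    exact AddSubgroup.zero_mem _
  | add y z _ _ hy hz =>
    have : (fun i => coeffMap φ ((y + z) i))
        = (fun i => coeffMap φ (y i)) + fun i => coeffMap φ (z i) := by
      funext i; simp [coeffMap_add]
    rw [this]
    exact AddSubgroup.add_mem _ hy hz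
  | neg y _ hy =>
    have : (fun i => coeffMap φ ((-y) i)) = -fun i => coeffMap φ (y i) := by
      funext i; simp [coeffMap_neg]
    rw [this]
    exact AddSubgroup.neg_mem _ hy

def Msub (n : ℕ) : AddSubgroup (Fin l → Polynomial R) :=
  MsubC q e B (fun a j => 1 ≤ a ∨ j ≤ n)

def Msub' (n : ℕ) : AddSubgroup (Fin l → Polynomial R) :=
  MsubC q e B (fun a j => 1 ≤ a ∨ j < n)

lemma embed_mul_embed (Q j k : ℕ) (a b : R[X]) :
    embed Q j a * embed Q k b = expand R Q (a * b) * X ^ (j + k) := by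
  unfold embed
  rw [map_mul, pow_add]
  ring

/-- the slice of `B.mulVec u` decomposes into `H_j`-terms. -/
lemma slice_mulVec {n : ℕ} (hQ : 0 < q ^ e) (hn : n < q ^ e)
    (u : Fin l → Polynomial R) (i : Fin l) :
    slice (q ^ e) n (B.mulVec u i) =
      ∑ jk ∈ Finset.range (q ^ e) ×ˢ Finset.range (q ^ e),
        (if jk.1 + jk.2 = n then
            (Hmat q e B jk.1).mulVec (fun i' => slice (q ^ e) jk.2 (u i')) i
          else if jk.1 + jk.2 = n + q ^ e then
            X * (Hmat q e B jk.1).mulVec (fun i' => slice (q ^ e) jk.2 (u i')) i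
          else 0) := by
  set Q := q ^ e with hQdef
  have h1 : B.mulVec u i
      = ∑ i', ∑ jk ∈ Finset.range Q ×ˢ Finset.range Q,
          expand R Q (slice Q jk.1 (B i i') * slice Q jk.2 (u i')) * X ^ (jk.1 + jk.2) := by
    rw [Matrix.mulVec]
    apply Finset.sum_congr rfl
    intro i' _
    show B i i' * u i' = _
    conv_lhs => rw [eq_sum_embed_slice hQ (B i i'), eq_sum_embed_slice hQ (u i')]
    rw [Finset.sum_mul_sum, ← Finset.sum_product']
    apply Finset.sum_congr rfl
    intro jk _
    exact embed_mul_embed Q jk.1 jk.2 _ _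
  have hadd : ∀ (s : Finset (Fin l)) (g : Fin l → R[X]),
      slice Q n (∑ i' ∈ s, g i') = ∑ i' ∈ s, slice Q n (g i') := by
    intro s g
    induction s using Finset.induction with
    | empty => simp [slice_zero]
    | insert _ _ hne ih =>
      rw [Finset.sum_insert hne, Finset.sum_insert hne, slice_add Q n hQ, ih]
  have hadd2 : ∀ (s : Finset (ℕ × ℕ)) (g : ℕ × ℕ → R[X]),
      slice Q n (∑ jk ∈ s, g jk) = ∑ jk ∈ s, slice Q n (g jk) := by
    intro s g
    induction s using Finset.induction with
    | empty => simp [slice_zero]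
    | insert _ _ hne ih =>
      rw [Finset.sum_insert hne, Finset.sum_insert hne, slice_add Q n hQ, ih]
  rw [h1, hadd,
    Finset.sum_congr rfl (fun i' _ => hadd2 (Finset.range Q ×ˢ Finset.range Q) _),
    Finset.sum_comm]
  apply Finset.sum_congr rfl
  intro jk hjk
  rw [Finset.mem_product, Finset.mem_range, Finset.mem_range] at hjk
  have hterm : ∀ i' : Fin l,
      slice Q n (expand R Q (slice Q jk.1 (B i i') * slice Q jk.2 (u i')) * X ^ (jk.1 + jk.2))
      = (if jk.1 + jk.2 = n then Hmat q e B jk.1 i i' * slice Q jk.2 (u i')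
        else if jk.1 + jk.2 = n + Q then X * (Hmat q e B jk.1 i i' * slice Q jk.2 (u i'))
        else 0) := by
    intro i'
    rw [slice_expand_shift hQ hn (by omega), Hmat_eq_slice]
  rw [Finset.sum_congr rfl (fun i' _ => hterm i')]
  split_ifs with h1' h2'
  · rw [Matrix.mulVec]
    rfl
  · rw [Matrix.mulVec, ← Finset.mul_sum]
    rfl
  · exact Finset.sum_const_zero

end MS
end St18
end St18Aux5
noncomputable section St18Aux6
namespace St18
open Polynomial Classical

variable {R : Type*} [CommRing R] {l : ℕ}

lemma easy_dir (q e : ℕ) (B : Matrix (Fin l) (Fin l) (Polynomial R))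
    (p γe : ℕ) [Fact p.Prime] [CharP R p] (hQΓ : q ^ e = p ^ γe)
    {x : Fin l → Polynomial R}
    (hx : x ∈ VClosure p γe (q ^ e)
      {w : Fin l → Polynomial R | ∃ u : Fin l → Polynomial R, w = B.mulVec u})
    {n : ℕ} (hn : n < q ^ e) :
    (fun i => slice (q ^ e) n (x i)) ∈ Msub q e B n := by
  have hp : 0 < p := (Fact.out : p.Prime).pos
  have hQ : 0 < q ^ e := hQΓ ▸ Nat.pow_pos (n := γe) hp
  set Q := q ^ e with hQdef
  let V : AddSubgroup (Fin l → Polynomial R) :=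
    { carrier := {w | ∀ n' : ℕ, n' < Q → (fun i => slice Q n' (w i)) ∈ Msub q e B n'}
      zero_mem' := by
        intro n' hn'
        have : (fun i => slice Q n' ((0 : Fin l → R[X]) i)) = 0 := by
          funext i; exact slice_zero Q n'
        rw [this]
        exact AddSubgroup.zero_mem _
      add_mem' := by
        intro a b ha hb n' hn'
        have : (fun i => slice Q n' ((a + b) i))
            = (fun i => slice Q n' (a i)) + fun i => slice Q n' (b i) := by
          funext i; exact slice_add Q n' hQ _ _
        rw [this]
        exact AddSubgroup.add_mem _ (ha n' hn') (hb n' hn')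
      neg_mem' := by
        intro a ha n' hn'
        have : (fun i => slice Q n' ((-a) i)) = -fun i => slice Q n' (a i) := by
          funext i; exact slice_neg Q n' hQ _
        rw [this]
        exact AddSubgroup.neg_mem _ (ha n' hn') }
  have hle : VClosure p γe Q {w : Fin l → Polynomial R | ∃ u, w = B.mulVec u} ≤ V := by
    apply VClosure_le
    · -- generators
      rintro w ⟨u, rfl⟩ n' hn'
      show (fun i => slice Q n' (B.mulVec u i)) ∈ Msub q e B n'
      have hdecomp : (fun i => slice Q n' (B.mulVec u i))
          = ∑ jk ∈ Finset.range Q ×ˢ Finset.range Q,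
            (if jk.1 + jk.2 = n' then
                (Hmat q e B jk.1).mulVec (fun i' => slice Q jk.2 (u i'))
              else if jk.1 + jk.2 = n' + Q then
                (fun i => X * (Hmat q e B jk.1).mulVec (fun i' => slice Q jk.2 (u i')) i)
              else 0) := by
        funext i
        rw [slice_mulVec q e B hQ hn' u i, Finset.sum_apply]
        apply Finset.sum_congr rfl
        intro jk _
        split_ifs <;> rfl
      rw [hdecomp]
      apply AddSubgroup.sum_mem
      intro jk hjk
      rw [Finset.mem_product, Finset.mem_range, Finset.mem_range] at hjk
      split_ifs with h1 h2
      · have heq : (Hmat q e B jk.1).mulVec (fun i' => slice Q jk.2 (u i'))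
            = fun i => coeffMap (AddMonoidHom.id R)
                (X ^ 0 * (Hmat q e B jk.1).mulVec (fun i' => slice Q jk.2 (u i')) i) := by
          funext i
          rw [pow_zero, one_mul, coeffMap_id]
        rw [heq]
        exact MsubC_mem_gen q e B _ 0 jk.1 _ (IsQLinear_id _) hjk.1 (Or.inr (by omega))
      · have heq : (fun i => X * (Hmat q e B jk.1).mulVec (fun i' => slice Q jk.2 (u i')) i)
            = fun i => coeffMap (AddMonoidHom.id R)
                (X ^ 1 * (Hmat q e B jk.1).mulVec (fun i' => slice Q jk.2 (u i')) i) := by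
          funext i
          rw [pow_one, coeffMap_id]
        rw [heq]
        exact MsubC_mem_gen q e B _ 1 jk.1 _ (IsQLinear_id _) hjk.1 (Or.inl (by omega))
      · exact AddSubgroup.zero_mem _
    · -- X-stability
      intro v hv n' hn'
      by_cases h0 : n' = 0
      · subst h0
        have heq : (fun i => slice Q 0 ((fun i => X * v i) i))
            = fun i => X * slice Q (Q - 1) (v i) := by
          funext i
          rw [show slice Q 0 ((fun i => X * v i) i) = slice Q 0 (X * v i) from rfl,
            slice_X_mul hQ hn', if_pos rfl]
        rw [show (fun i => slice Q 0 ((fun i => X * v i) i)) = _ from heq]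
        exact MsubC_xmul q e B (fun a j ha => Or.inl ha) (hv (Q - 1) (by omega))
      · have heq : (fun i => slice Q n' ((fun i => X * v i) i))
            = fun i => slice Q (n' - 1) (v i) := by
          funext i
          rw [show slice Q n' ((fun i => X * v i) i) = slice Q n' (X * v i) from rfl,
            slice_X_mul hQ hn', if_neg h0]
        rw [show (fun i => slice Q n' ((fun i => X * v i) i)) = _ from heq]
        exact MsubC_mono q e B (fun a j h => h.imp id (by omega)) (hv (n' - 1) (by omega))
    · -- theta-stability
      intro i h1i h2i v hv n' hn'
      have heq : (fun ii => slice Q n' ((fun j => thetaOp (p ^ (i - 1)) (v j)) ii))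
          = (n' / p ^ (i - 1) % p) • fun ii => slice Q n' (v ii) := by
        funext ii
        exact slice_theta (Q := Q) (Γ := γe) hQΓ (by omega) _
      rw [heq]
      exact AddSubgroup.nsmul_mem _ (hv n' hn') _
    · -- coeffMap-stability
      intro φ hφ v hv n' hn'
      have heq : (fun j => slice Q n' ((fun j => coeffMap φ (v j)) j))
          = fun j => coeffMap φ (slice Q n' (v j)) := by
        funext j
        exact slice_coeffMap hQ φ _
      rw [heq]
      exact MsubC_coeffMap q e B hφ (hv n' hn')
  exact hle hx n hn

end St18
end St18Aux6
noncomputable section St18Aux7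
namespace St18
open Polynomial Classical

variable {R : Type*} [CommRing R] {l : ℕ}

lemma coeffMap_finset_sum {ι : Type*} (φ : R →+ R) (s : Finset ι) (g : ι → R[X]) :
    coeffMap φ (∑ i ∈ s, g i) = ∑ i ∈ s, coeffMap φ (g i) := by
  induction s using Finset.induction with
  | empty => simp [coeffMap_zero]
  | insert _ _ hne ih => rw [Finset.sum_insert hne, Finset.sum_insert hne, coeffMap_add, ih]

lemma Msub_le_Msub' (q e : ℕ) (B : Matrix (Fin l) (Fin l) (Polynomial R))
    {m : ℕ} (hm : m < q ^ e)
    (hcl : AddSubgroup.closure (⋃ n ∈ Finset.range m, DHGens q e B n)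
        = AddSubgroup.closure (⋃ n ∈ Finset.range (m + 1), DHGens q e B n)) :
    Msub q e B m ≤ Msub' q e B m := by
  have hlow : AddSubgroup.closure (⋃ n ∈ Finset.range m, DHGens q e B n)
      ≤ Msub' q e B m := by
    rw [AddSubgroup.closure_le]
    intro y hy
    simp only [Set.mem_iUnion] at hy
    obtain ⟨n, hn, hyn⟩ := hy
    rw [Finset.mem_range] at hn
    obtain ⟨ψ, hψ, v, rfl⟩ := hyn
    have heq : (fun i => coeffMap ψ (∑ j, Hmat q e B n i j * C (v j)))
        = fun i => coeffMap ψ (X ^ 0 * (Hmat q e B n).mulVec (fun j => C (v j)) i) := by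
      funext i
      rw [pow_zero, one_mul]
      rfl
    rw [heq]
    exact MsubC_mem_gen q e B ψ 0 n _ hψ (by omega) (Or.inr hn)
  rw [show Msub q e B m = MsubC q e B (fun a j => 1 ≤ a ∨ j ≤ m) from rfl]
  rw [show Msub' q e B m = MsubC q e B (fun a j => 1 ≤ a ∨ j < m) from rfl]
  rw [MsubC, AddSubgroup.closure_le]
  rintro y ⟨φ, a, j, f, h1, h2, h3, rfl⟩
  by_cases ha : 1 ≤ a
  · exact MsubC_mem_gen q e B φ a j f h1 h2 (Or.inl ha)
  by_cases hj : j < m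
  · exact MsubC_mem_gen q e B φ a j f h1 h2 (Or.inr hj)
  -- a = 0, j = m
  have ha0 : a = 0 := by omega
  have hjm : j = m := by
    rcases h3 with h3 | h3
    · omega
    · omega
  subst ha0; subst hjm
  -- decompose f into monomials
  set D := (Finset.univ.sup fun i' : Fin l => (f i').natDegree) + 1 with hD
  have hf : ∀ i', f i' = ∑ b ∈ Finset.range D, (monomial b) ((f i').coeff b) := by
    intro i'
    apply Polynomial.as_sum_range'
    have : (f i').natDegree ≤ Finset.univ.sup fun i'' : Fin l => (f i'').natDegree :=
      Finset.le_sup (f := fun i'' : Fin l => (f i'').natDegree) (Finset.mem_univ i')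
    omega
  have hmv : (fun i => coeffMap φ (X ^ 0 * (Hmat q e B j).mulVec f i))
      = ∑ b ∈ Finset.range D,
          fun i => coeffMap φ
            (X ^ b * (Hmat q e B j).mulVec (fun i' => C ((f i').coeff b)) i) := by
    funext i
    rw [Finset.sum_apply, pow_zero, one_mul]
    have hexp : (Hmat q e B j).mulVec f i
        = ∑ b ∈ Finset.range D,
            X ^ b * (Hmat q e B j).mulVec (fun i' => C ((f i').coeff b)) i := by
      show ∑ i', Hmat q e B j i i' * f i' = _
      have step1 : ∀ i' : Fin l, Hmat q e B j i i' * f i'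
          = ∑ b ∈ Finset.range D,
              X ^ b * (Hmat q e B j i i' * C ((f i').coeff b)) := by
        intro i'
        conv_lhs => rw [hf i']
        rw [Finset.mul_sum]
        apply Finset.sum_congr rfl
        intro b _
        rw [← Polynomial.C_mul_X_pow_eq_monomial]
        ring
      rw [Finset.sum_congr rfl (fun i' _ => step1 i'), Finset.sum_comm]
      apply Finset.sum_congr rfl
      intro b _
      rw [show (Hmat q e B j).mulVec (fun i' => C ((f i').coeff b)) i
          = ∑ i', Hmat q e B j i i' * C ((f i').coeff b) from rfl, Finset.mul_sum]
    rw [hexp, coeffMap_finset_sum]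
  rw [hmv]
  apply AddSubgroup.sum_mem
  intro b _
  by_cases hb : 1 ≤ b
  · exact MsubC_mem_gen q e B φ b j _ h1 h2 (Or.inl hb)
  · have hb0 : b = 0 := by omega
    subst hb0
    -- this is an element of DHGens q e B m
    have hmem : (fun i => coeffMap φ
          (X ^ 0 * (Hmat q e B j).mulVec (fun i' => C ((f i').coeff 0)) i))
        ∈ DHGens q e B j := by
      refine ⟨φ, h1, fun i' => (f i').coeff 0, ?_⟩
      funext i
      rw [pow_zero, one_mul]
      rfl
    have h1' : (fun i => coeffMap φ
          (X ^ 0 * (Hmat q e B j).mulVec (fun i' => C ((f i').coeff 0)) i))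
        ∈ AddSubgroup.closure (⋃ n ∈ Finset.range (j + 1), DHGens q e B n) := by
      apply AddSubgroup.subset_closure
      simp only [Set.mem_iUnion]
      exact ⟨j, Finset.mem_range.mpr (by omega), hmem⟩
    rw [← hcl] at h1'
    exact hlow h1'

end St18
end St18Aux7
noncomputable section St18Aux8
namespace St18
open Polynomial Classical

variable {R : Type*} [CommRing R] {l : ℕ}

lemma embed_zero (Q n : ℕ) : embed Q n (0 : R[X]) = 0 := by
  unfold embed
  simp

lemma pfilter_finset_sum {ι : Type*} (P : ℕ → Prop) (s : Finset ι) (g : ι → R[X]) :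
    pfilter P (∑ i ∈ s, g i) = ∑ i ∈ s, pfilter P (g i) := by
  induction s using Finset.induction with
  | empty =>
    ext N
    simp [pfilter_coeff]
  | insert _ _ hne ih => rw [Finset.sum_insert hne, Finset.sum_insert hne, pfilter_add, ih]

lemma VClosure_Xpow {p Γ Q : ℕ} {T : Set (Fin l → Polynomial R)} (c : ℕ)
    {v : Fin l → Polynomial R} (h : v ∈ VClosure p Γ Q T) :
    (fun i => X ^ c * v i) ∈ VClosure p Γ Q T := by
  induction c with
  | zero =>
    have : (fun i => X ^ 0 * v i) = v := by funext i; simp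
    rw [this]; exact h
  | succ c ih =>
    have : (fun i => X ^ (c + 1) * v i) = fun i => X * ((fun i => X ^ c * v i) i) := by
      funext i
      rw [pow_succ]
      ring
    rw [this]
    exact VClosure_X ih

lemma core_mod {Q m j a' : ℕ} (hm : m < Q) (hj : j < Q) (hja : j + 1 ≤ m + a' * Q)
    {j' : ℕ} (hj' : j' < Q) :
    (j' + (m + a' * Q - j)) % Q = m ↔ j' = j := by
  have hjD : j + (m + a' * Q - j) = m + a' * Q := by omega
  have hbase : (j + (m + a' * Q - j)) % Q = m := by
    rw [hjD, Nat.add_mul_mod_self_right, Nat.mod_eq_of_lt hm]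
  constructor
  · intro h
    have hmodeq : j' + (m + a' * Q - j) ≡ j + (m + a' * Q - j) [MOD Q] := by
      unfold Nat.ModEq
      rw [h, hbase]
    have := Nat.ModEq.add_right_cancel' _ hmodeq
    unfold Nat.ModEq at this
    rw [Nat.mod_eq_of_lt hj', Nat.mod_eq_of_lt hj] at this
    exact this
  · rintro rfl
    exact hbase

lemma expand_shift_eq (Q m a' : ℕ) (h : R[X]) :
    expand R Q (X ^ a' * h) * X ^ m = expand R Q h * X ^ (m + a' * Q) := by
  rw [map_mul, map_pow, Polynomial.expand_X, ← pow_mul, pow_add]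
  ring

/-- CORE of the hard direction: `embed Q m (X^{a'} · H_j f) ∈ W'` for `a' ∈ {0,1}`. -/
lemma hard_core (q e : ℕ) (B : Matrix (Fin l) (Fin l) (Polynomial R))
    (p γe : ℕ) [Fact p.Prime] [CharP R p] (hQΓ : q ^ e = p ^ γe)
    {m j a' : ℕ} (hm : m < q ^ e) (hj : j < q ^ e) (hja : j + 1 ≤ m + a' * q ^ e)
    (f : Fin l → Polynomial R) :
    (fun i => embed (q ^ e) m (X ^ a' * (Hmat q e B j).mulVec f i))
      ∈ VClosure p γe (q ^ e)
        {w : Fin l → Polynomial R | ∃ u : Fin l → Polynomial R,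
          w = fun i => X * B.mulVec u i} := by
  have hp : 0 < p := (Fact.out : p.Prime).pos
  have hQ : 0 < q ^ e := hQΓ ▸ Nat.pow_pos (n := γe) hp
  set Q := q ^ e with hQdef
  set c := m + a' * Q - 1 - j with hc
  set u : Fin l → Polynomial R := fun i' => expand R Q (f i') * X ^ c with hu
  have hw0 : (fun i => X * B.mulVec u i) ∈ VClosure p γe Q
      {w : Fin l → Polynomial R | ∃ u, w = fun i => X * B.mulVec u i} :=
    VClosure_subset p γe Q _ ⟨u, rfl⟩
  have hfil := VClosure_filter p hw0 m
  have hkey : vfilter (fun N => N % p ^ γe = m % p ^ γe) (fun i => X * B.mulVec u i)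
      = fun i => embed Q m (X ^ a' * (Hmat q e B j).mulVec f i) := by
    funext i
    show pfilter _ (X * B.mulVec u i) = _
    have hpred : ∀ N, (N % p ^ γe = m % p ^ γe) ↔ (N % Q = m) := by
      intro N
      rw [← hQΓ, Nat.mod_eq_of_lt hm]
    rw [pfilter_congr hpred]
    have hc1 : c + 1 = m + a' * Q - j := by omega
    have hBu : B.mulVec u i = ∑ j' ∈ Finset.range Q,
        expand R Q ((Hmat q e B j').mulVec f i) * X ^ (j' + c) := by
      show ∑ i', B i i' * u i' = _
      have step1 : ∀ i' : Fin l, B i i' * u i'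
          = ∑ j' ∈ Finset.range Q,
              expand R Q (Hmat q e B j' i i' * f i') * X ^ (j' + c) := by
        intro i'
        conv_lhs => rw [eq_sum_embed_slice hQ (B i i')]
        rw [Finset.sum_mul]
        apply Finset.sum_congr rfl
        intro j' _
        rw [show u i' = embed Q c (f i') from rfl, embed_mul_embed,
          show slice Q j' (B i i') = Hmat q e B j' i i' from rfl]
      rw [Finset.sum_congr rfl (fun i' _ => step1 i'), Finset.sum_comm]
      apply Finset.sum_congr rfl
      intro j' _
      rw [show (Hmat q e B j').mulVec f i = ∑ i', Hmat q e B j' i i' * f i' from rfl,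
        map_sum, Finset.sum_mul]
    have hX : X * B.mulVec u i
        = ∑ j' ∈ Finset.range Q,
            expand R Q ((Hmat q e B j').mulVec f i) * X ^ (j' + (m + a' * Q - j)) := by
      rw [hBu, Finset.mul_sum]
      apply Finset.sum_congr rfl
      intro j' _
      rw [← hc1, show j' + (c + 1) = (j' + c) + 1 by omega, pow_succ]
      ring
    rw [hX, pfilter_finset_sum]
    have hterm : ∀ j' ∈ Finset.range Q,
        pfilter (fun N => N % Q = m)
          (expand R Q ((Hmat q e B j').mulVec f i) * X ^ (j' + (m + a' * Q - j)))
        = if j' = j then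
            expand R Q ((Hmat q e B j').mulVec f i) * X ^ (j' + (m + a' * Q - j))
          else 0 := by
      intro j' hj'
      rw [Finset.mem_range] at hj'
      rw [pfilter_expand_shift hQ hm]
      congr 1
      rw [eq_iff_iff]
      exact core_mod hm hj hja hj'
    rw [Finset.sum_congr rfl hterm, Finset.sum_ite_eq', if_pos (Finset.mem_range.mpr hj)]
    rw [show j + (m + a' * Q - j) = m + a' * Q by omega]
    unfold embed
    rw [expand_shift_eq]
  rw [hkey] at hfil
  exact hfil

end St18
end St18Aux8
noncomputable section St18Aux9
namespace St18
open Polynomial Classical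

variable {R : Type*} [CommRing R] {l : ℕ}

lemma hard_dir (q e : ℕ) (B : Matrix (Fin l) (Fin l) (Polynomial R))
    (p γe : ℕ) [Fact p.Prime] [CharP R p] (hQΓ : q ^ e = p ^ γe)
    {m : ℕ} (hm : m < q ^ e) {g : Fin l → Polynomial R} (hg : g ∈ Msub' q e B m) :
    (fun i => embed (q ^ e) m (g i)) ∈ VClosure p γe (q ^ e)
      {w : Fin l → Polynomial R | ∃ u : Fin l → Polynomial R,
        w = fun i => X * B.mulVec u i} := by
  have hp : 0 < p := (Fact.out : p.Prime).pos
  have hQ : 0 < q ^ e := hQΓ ▸ Nat.pow_pos (n := γe) hp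
  induction hg using AddSubgroup.closure_induction with
  | mem y hy =>
    obtain ⟨φ, a, j, f, h1, h2, h3, rfl⟩ := hy
    have key : ∀ a' : ℕ, a' ≤ a → j + 1 ≤ m + a' * q ^ e →
        (fun i => embed (q ^ e) m
            ((fun i => coeffMap φ (X ^ a * (Hmat q e B j).mulVec f i)) i))
          ∈ VClosure p γe (q ^ e)
            {w : Fin l → Polynomial R | ∃ u, w = fun i => X * B.mulVec u i} := by
      intro a' ha' hja
      have hrw : (fun i => embed (q ^ e) m
            ((fun i => coeffMap φ (X ^ a * (Hmat q e B j).mulVec f i)) i))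
          = fun i => coeffMap φ (X ^ ((a - a') * q ^ e)
              * embed (q ^ e) m (X ^ a' * (Hmat q e B j).mulVec f i)) := by
        funext i
        rw [show embed (q ^ e) m ((fun i => coeffMap φ (X ^ a * (Hmat q e B j).mulVec f i)) i)
            = embed (q ^ e) m (coeffMap φ (X ^ a * (Hmat q e B j).mulVec f i)) from rfl,
          embed_coeffMap hQ hm,
          show (X : R[X]) ^ a * (Hmat q e B j).mulVec f i
            = X ^ (a - a') * (X ^ a' * (Hmat q e B j).mulVec f i) by
              rw [← mul_assoc, ← pow_add]
              congr 2
              omega,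
          embed_Xpow_mul]
      rw [hrw]
      exact VClosure_coeffMap h1
        (VClosure_Xpow _ (hard_core q e B p γe hQΓ hm h2 hja f))
    by_cases hjm : j < m
    · exact key 0 (by omega) (by omega)
    · rcases h3 with ha | hj'
      · refine key 1 ha ?_
        have : j < q ^ e := h2
        omega
      · omega
  | zero =>
    have : (fun i => embed (q ^ e) m ((0 : Fin l → R[X]) i)) = 0 := by
      funext i
      exact embed_zero _ _
    rw [this]
    exact AddSubgroup.zero_mem _
  | add y z _ _ hy hz =>
    have : (fun i => embed (q ^ e) m ((y + z) i))
        = (fun i => embed (q ^ e) m (y i)) + fun i => embed (q ^ e) m (z i) := by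
      funext i
      exact embed_add _ _ _ _
    rw [this]
    exact AddSubgroup.add_mem _ hy hz
  | neg y _ hy =>
    have : (fun i => embed (q ^ e) m ((-y) i)) = -fun i => embed (q ^ e) m (y i) := by
      funext i
      exact embed_neg _ _ _
    rw [this]
    exact AddSubgroup.neg_mem _ hy

end St18
end St18Aux9
open Polynomial in
theorem stmt_18 {R : Type*} [CommRing R] (p : ℕ) [Fact p.Prime] [CharP R p]
    (γ : ℕ) (hγ : 1 ≤ γ) (q : ℕ) (hq : q = p ^ γ)
    (l : ℕ) (hl : 1 ≤ l) (A : Matrix (Fin l) (Fin l) (Polynomial R))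
    (e : ℕ) (he : 1 ≤ e) (m : ℕ) (hm : m < q ^ e)
    (x : Fin l → Polynomial R)
    (hxW : x ∈ VClosure p (γ * e) (q ^ e)
      {w : Fin l → Polynomial R | ∃ u : Fin l → Polynomial R, w = (twistProd q A e).mulVec u})
    (hxW' : x ∉ VClosure p (γ * e) (q ^ e)
      {w : Fin l → Polynomial R | ∃ u : Fin l → Polynomial R,
        w = fun i => X * (twistProd q A e).mulVec u i})
    (heig : ∀ i : ℕ, 1 ≤ i → i ≤ γ * e →
      (fun j => thetaOp (p ^ (i - 1)) (x j)) - (m / p ^ (i - 1) % p) • x ∈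
        VClosure p (γ * e) (q ^ e)
          {w : Fin l → Polynomial R | ∃ u : Fin l → Polynomial R,
            w = fun i => X * (twistProd q A e).mulVec u i}) :
    AddSubgroup.closure (⋃ n ∈ Finset.range m, DHGens q e (twistProd q A e) n)
      ≠ AddSubgroup.closure (⋃ n ∈ Finset.range (m + 1), DHGens q e (twistProd q A e) n) := by
  intro hcl
  have hp : 0 < p := (Fact.out : p.Prime).pos
  have hQΓ : q ^ e = p ^ (γ * e) := by
    rw [hq, ← pow_mul]
  have hQ : 0 < q ^ e := hQΓ ▸ Nat.pow_pos (n := (γ * e)) hp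
  have hE : ∀ i : ℕ, 1 ≤ i → i ≤ γ * e →
      St18.Eop (p ^ (i - 1)) (m / p ^ (i - 1) % p) x ∈ VClosure p (γ * e) (q ^ e)
        {w : Fin l → Polynomial R | ∃ u : Fin l → Polynomial R,
          w = fun i => X * (twistProd q A e).mulVec u i} := by
    intro i h1 h2
    exact heig i h1 h2
  have hsub := St18.VClosure_eigen_filter p x m hE
  have hyW' : St18.vfilter (fun N => N % p ^ (γ * e) = m % p ^ (γ * e)) x
      ∈ VClosure p (γ * e) (q ^ e)
        {w : Fin l → Polynomial R | ∃ u : Fin l → Polynomial R,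
          w = fun i => X * (twistProd q A e).mulVec u i} := by
    have h1 : St18.vfilter (fun N => N % p ^ (γ * e) = m % p ^ (γ * e)) x
        = St18.vfilter (fun N => N % q ^ e = m) x := by
      funext j
      refine St18.pfilter_congr (fun N => ?_) _
      rw [← hQΓ, Nat.mod_eq_of_lt hm]
    rw [h1, St18.vfilter_eq_embed_slice hQ hm]
    exact St18.hard_dir q e (twistProd q A e) p (γ * e) hQΓ hm
      (St18.Msub_le_Msub' q e (twistProd q A e) hm hcl
        (St18.easy_dir q e (twistProd q A e) p (γ * e) hQΓ hxW hm))
  have hxmem : x ∈ VClosure p (γ * e) (q ^ e)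
      {w : Fin l → Polynomial R | ∃ u : Fin l → Polynomial R,
        w = fun i => X * (twistProd q A e).mulVec u i} := by
    have := AddSubgroup.add_mem _ hsub hyW'
    rwa [sub_add_cancel] at this
  exact hxW' hxmem
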